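/- Let (Ω, μ) be a measure space, let η : ℝ → ℝ be nondecreasing with η(0) = 0, and let v : Ω → ℝ be measurable such that x ↦ η(v(x))·v(x) is integrable with ∫_Ω η(v(x))·v(x) dμ(x) ≤ C₀ for some constant C₀ ≥ 0. Then for every M > 0 and every measurable set A ⊆ Ω of finite measure, ∫_A |η(v(x))| dμ(x) ≤ C₀/M + γ(M)·μ(A), where γ(M) := max(η(M), −η(−M)). -/

import Mathlib

open MeasureTheory

/-- If `η` is nondecreasing with `η 0 = 0` and `∫ η(v) · v ≤ C₀`, then for any
measurable set `A` of finite measure and any `M > 0`,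
`∫_A |η (v x)| ≤ C₀ / M + γ(M) · μ(A)` where `γ(M) = max (η M) (-η (-M))`. -/
theorem stmt_1 {Ω : Type*} [MeasurableSpace Ω] (μ : Measure Ω)
    (η : ℝ → ℝ) (hη : Monotone η) (hη0 : η 0 = 0)
    (v : Ω → ℝ) (hv : Measurable v)
    (C₀ : ℝ) (hC₀ : 0 ≤ C₀)
    (hint : Integrable (fun x => η (v x) * v x) μ)
    (hbound : ∫ x, η (v x) * v x ∂μ ≤ C₀)
    (M : ℝ) (hM : 0 < M) (A : Set Ω) (hA : MeasurableSet A) (hAfin : μ A < ⊤) :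
    ∫ x in A, |η (v x)| ∂μ ≤ C₀ / M + max (η M) (-η (-M)) * (μ A).toReal := by
  set γ : ℝ := max (η M) (-η (-M)) with hγdef
  have hγ0 : 0 ≤ γ := le_trans (by rw [← hη0]; exact hη hM.le) (le_max_left _ _)
  -- nonnegativity of η s * s
  have hnn : ∀ s : ℝ, 0 ≤ η s * s := by
    intro s
    rcases le_or_gt 0 s with h | h
    · exact mul_nonneg (hη0 ▸ hη h) h
    · have h1 : η s ≤ 0 := hη0 ▸ hη h.le
      nlinarith
  -- key pointwise bound
  have key : ∀ s : ℝ, |η s| ≤ η s * s / M + γ := by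
    intro s
    rcases le_or_gt (|s|) M with h | h
    · have h1 : η s ≤ γ := le_trans (hη (le_of_abs_le h)) (le_max_left _ _)
      have h2 : -η s ≤ γ := by
        have : η (-M) ≤ η s := hη (neg_le_of_abs_le h)
        exact le_trans (neg_le_neg this) (le_max_right _ _)
      have : |η s| ≤ γ := abs_le.mpr ⟨neg_le.mp h2, h1⟩
      have : γ ≤ η s * s / M + γ := le_add_of_nonneg_left (div_nonneg (hnn s) hM.le)
      linarith [abs_le.mpr ⟨neg_le.mp h2, h1⟩]
    · have hMs : M ≤ |s| := h.le
      have hkey : |η s| * M ≤ η s * s := by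
        rcases le_or_gt 0 s with hs | hs
        · have hsM : M ≤ s := by rwa [abs_of_nonneg hs] at hMs
          have hηs : 0 ≤ η s := hη0 ▸ hη (hM.le.trans hsM)
          rw [abs_of_nonneg hηs]
          exact mul_le_mul_of_nonneg_left hsM hηs
        · have hsM : M ≤ -s := by rwa [abs_of_neg hs] at hMs
          have hηs : η s ≤ 0 := hη0 ▸ hη hs.le
          rw [abs_of_nonpos hηs]
          calc -η s * M ≤ -η s * -s := mul_le_mul_of_nonneg_left hsM (neg_nonneg.mpr hηs)
            _ = η s * s := by ring
      have : |η s| ≤ η s * s / M := (le_div_iff₀ hM).mpr hkey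
      linarith
    -- measurability
  have hηmeas : Measurable η := hη.measurable
  have hmeas : AEStronglyMeasurable (fun x => |η (v x)|) (μ.restrict A) :=
    ((hηmeas.comp hv).abs).aestronglyMeasurable
  -- the dominating function is integrable on A
  have : Fact (μ A < ⊤) := ⟨hAfin⟩
  have hgint : Integrable (fun x => η (v x) * v x / M + γ) (μ.restrict A) := by
    exact ((hint.restrict (s := A)).div_const M).add (integrable_const _)
  have habs : Integrable (fun x => |η (v x)|) (μ.restrict A) := by
    refine hgint.mono' hmeas ?_
    filter_upwards with x
    have := key (v x)
    have h0 : 0 ≤ η (v x) * v x / M + γ := le_trans (abs_nonneg _) this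
    rwa [Real.norm_eq_abs, abs_abs]
  have step1 : ∫ x in A, |η (v x)| ∂μ ≤ ∫ x in A, (η (v x) * v x / M + γ) ∂μ := by
    refine integral_mono habs hgint ?_
    intro x; exact key (v x)
  have step2 : ∫ x in A, (η (v x) * v x / M + γ) ∂μ
      = (∫ x in A, η (v x) * v x ∂μ) / M + γ * (μ A).toReal := by
    rw [integral_add ((hint.restrict (s := A)).div_const M) (integrable_const _),
      integral_div, setIntegral_const, smul_eq_mul, mul_comm]
    rfl
  have step3 : ∫ x in A, η (v x) * v x ∂μ ≤ ∫ x, η (v x) * v x ∂μ := by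
    apply setIntegral_le_integral hint
    filter_upwards with x using hnn (v x)
  calc ∫ x in A, |η (v x)| ∂μ ≤ (∫ x in A, η (v x) * v x ∂μ) / M + γ * (μ A).toReal := by
        rw [← step2]; exact step1
    _ ≤ C₀ / M + γ * (μ A).toReal := by
        gcongr
        exact step3.trans hbound
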